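/- Let a, b be real numbers with 0 ≤ a ≤ 1/2, b > 0 and a² + b² ≥ 1, and let Λ ⊂ ℝ² be the lattice generated over ℤ by (1,0) and (a,b). Then the Voronoi cell V(0) = {x ∈ ℝ² : ‖x‖ ≤ ‖x − λ‖ for all λ ∈ Λ} equals the convex hull of the six points ±(1/2, (a² + b² − a)/(2b)), ±(−1/2, (a² + b² − a)/(2b)), and ±((2a−1)/2, (b² + a − a²)/(2b)). -/

import Mathlib

private lemma int_msub (m : ℤ) : 0 ≤ m * (m - 1) := by
  rcases le_or_gt 1 m with h | h
  · exact mul_nonneg (by linarith) (by linarith)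
  · nlinarith [mul_nonneg (by linarith : (0:ℤ) ≤ -m) (by linarith : (0:ℤ) ≤ 1 - m)]

private lemma keyQ (a s : ℝ) (ha0 : 0 ≤ a) (ha : a ≤ 1/2) (hs : 1 ≤ s) (m n : ℤ) :
    0 ≤ (m:ℝ) * (m - 1) + s * ((n:ℝ) * (n - 1)) + 2 * a * m * n := by
  have hm : (0:ℝ) ≤ (m:ℝ) * ((m:ℝ) - 1) := by exact_mod_cast int_msub m
  have hn : (0:ℝ) ≤ (n:ℝ) * ((n:ℝ) - 1) := by exact_mod_cast int_msub n
  rcases le_or_gt 0 ((m:ℝ) * n) with hmn | hmn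
  · nlinarith
  · have h1 : m * n ≤ -1 := by
      have h0 : (m:ℝ) * n < 0 := hmn
      have : m * n < 0 := by exact_mod_cast h0
      omega
    have h1' : (m:ℝ) * n ≤ -1 := by exact_mod_cast h1
    have hZ : (0:ℝ) ≤ (m:ℝ)*((m:ℝ)-1) + (n:ℝ)*((n:ℝ)-1) + (m:ℝ)*(n:ℝ) := by
      nlinarith [sq_nonneg ((m:ℝ) + n), sq_nonneg ((m:ℝ) + n - 1)]
    have h2 : (0:ℝ) ≤ (s - 1) * ((n:ℝ) * ((n:ℝ) - 1)) := mul_nonneg (by linarith) hn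
    have h3 : (0:ℝ) ≤ (1 - 2*a) * (-((m:ℝ) * n)) := mul_nonneg (by linarith) (by linarith)
    nlinarith

private lemma norm_sq_two (y : EuclideanSpace ℝ (Fin 2)) : ‖y‖^2 = y 0^2 + y 1^2 := by
  rw [EuclideanSpace.norm_eq, Real.sq_sqrt (by positivity)]
  simp [Fin.sum_univ_two, sq_abs]

private lemma norm_le_iff_coord (x q : EuclideanSpace ℝ (Fin 2)) :
    ‖x‖ ≤ ‖x - q‖ ↔ 2 * (x 0 * q 0 + x 1 * q 1) ≤ q 0 ^ 2 + q 1 ^ 2 := by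
  rw [← pow_le_pow_iff_left₀ (norm_nonneg x) (norm_nonneg (x - q)) two_ne_zero,
    norm_sq_two, norm_sq_two]
  have h0 : (x - q) 0 = x 0 - q 0 := rfl
  have h1 : (x - q) 1 = x 1 - q 1 := rfl
  rw [h0, h1]
  constructor <;> intro h <;> nlinarith

private lemma combo3 {S : Set (EuclideanSpace ℝ (Fin 2))} {q₁ q₂ q₃ : EuclideanSpace ℝ (Fin 2)}
    (h₁ : q₁ ∈ S) (h₂ : q₂ ∈ S) (h₃ : q₃ ∈ S) {t₁ t₂ t₃ : ℝ}
    (ht₁ : 0 ≤ t₁) (ht₂ : 0 ≤ t₂) (ht₃ : 0 ≤ t₃) (hsum : t₁ + t₂ + t₃ = 1) :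
    t₁ • q₁ + t₂ • q₂ + t₃ • q₃ ∈ convexHull ℝ S := by
  have hw : ∑ i : Fin 3, ![t₁, t₂, t₃] i = 1 := by
    simp [Fin.sum_univ_three]; linarith
  have h := Finset.centerMass_mem_convexHull (t := (Finset.univ : Finset (Fin 3)))
      (w := ![t₁, t₂, t₃]) (z := ![q₁, q₂, q₃]) (R := ℝ)
      (by intro i _; fin_cases i <;> simpa)
      (by rw [hw]; norm_num)
      (by intro i _; fin_cases i <;> simpa)
  rwa [Finset.centerMass_eq_of_sum_1 _ _ hw, Fin.sum_univ_three] at h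

private lemma sector_case {S : Set (EuclideanSpace ℝ (Fin 2))}
    {u v x : EuclideanSpace ℝ (Fin 2)}
    (hu : u ∈ S) (hnu : -u ∈ S) (hv : v ∈ S)
    (hD : 0 < u 0 * v 1 - u 1 * v 0)
    (hcu : 0 ≤ u 0 * x 1 - u 1 * x 0)
    (hcv : v 0 * x 1 - v 1 * x 0 ≤ 0)
    {k w0 w1 : ℝ} (hk : 0 < k)
    (hwu : w0 * u 0 + w1 * u 1 = k) (hwv : w0 * v 0 + w1 * v 1 = k)
    (hwx : w0 * x 0 + w1 * x 1 ≤ k) :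
    x ∈ convexHull ℝ S := by
  have hDne : u 0 * v 1 - u 1 * v 0 ≠ 0 := ne_of_gt hD
  set α := (x 0 * v 1 - x 1 * v 0) / (u 0 * v 1 - u 1 * v 0) with hαdef
  set β := (u 0 * x 1 - u 1 * x 0) / (u 0 * v 1 - u 1 * v 0) with hβdef
  have hα : 0 ≤ α := div_nonneg (by linarith) hD.le
  have hβ : 0 ≤ β := div_nonneg hcu hD.le
  have hx0 : x 0 = α * u 0 + β * v 0 := by
    rw [hαdef, hβdef, div_mul_eq_mul_div, div_mul_eq_mul_div, ← add_div, eq_div_iff hDne]; ring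
  have hx1 : x 1 = α * u 1 + β * v 1 := by
    rw [hαdef, hβdef, div_mul_eq_mul_div, div_mul_eq_mul_div, ← add_div, eq_div_iff hDne]; ring
  have hwαβ : w0 * x 0 + w1 * x 1 = (α + β) * k := by
    rw [hx0, hx1]; linear_combination α * hwu + β * hwv
  have hab : α + β ≤ 1 := by
    have h2 : (α + β) * k ≤ 1 * k := by rw [one_mul]; linarith
    exact le_of_mul_le_mul_right h2 hk
  have hxeq : x = (α + (1 - α - β)/2) • u + ((1 - α - β)/2) • (-u) + β • v := by
    ext i
    fin_cases i
    · show x 0 = (α + (1 - α - β)/2) * u 0 + ((1 - α - β)/2) * (-(u 0)) + β * v 0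
      rw [hx0]; ring
    · show x 1 = (α + (1 - α - β)/2) * u 1 + ((1 - α - β)/2) * (-(u 1)) + β * v 1
      rw [hx1]; ring
  rw [hxeq]
  exact combo3 hu hnu hv (by linarith) (by linarith) hβ (by ring)

set_option maxHeartbeats 4000000 in
/-- For a Minkowski-reduced basis `{(1,0),(a,b)}` with `0 ≤ a ≤ 1/2`, `b > 0`,
`a² + b² ≥ 1`, the Voronoi cell of `0` is the convex hull of the six vertices
`±(1/2, (a²+b²−a)/(2b))`, `±(−1/2, (a²+b²−a)/(2b))`, `±((2a−1)/2, (b²+a−a²)/(2b))`. -/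
theorem voronoi_cell_eq_convexHull_vertices (a b : ℝ)
    (ha0 : 0 ≤ a) (ha : a ≤ 1 / 2) (hb : 0 < b) (hab : 1 ≤ a ^ 2 + b ^ 2)
    (v₁ v₂ : EuclideanSpace ℝ (Fin 2))
    (hv₁ : v₁ 0 = 1 ∧ v₁ 1 = 0)
    (hv₂ : v₂ 0 = a ∧ v₂ 1 = b)
    (Λ : Set (EuclideanSpace ℝ (Fin 2)))
    (hΛ : Λ = {p | ∃ m n : ℤ, p = m • v₁ + n • v₂})
    (p₁ p₂ p₃ : EuclideanSpace ℝ (Fin 2))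
    (hp₁ : p₁ 0 = 1 / 2 ∧ p₁ 1 = (a ^ 2 + b ^ 2 - a) / (2 * b))
    (hp₂ : p₂ 0 = -(1 / 2) ∧ p₂ 1 = (a ^ 2 + b ^ 2 - a) / (2 * b))
    (hp₃ : p₃ 0 = (2 * a - 1) / 2 ∧ p₃ 1 = (b ^ 2 + a - a ^ 2) / (2 * b)) :
    {x : EuclideanSpace ℝ (Fin 2) | ∀ p ∈ Λ, ‖x‖ ≤ ‖x - p‖} =
      convexHull ℝ ({p₁, -p₁, p₂, -p₂, p₃, -p₃} : Set (EuclideanSpace ℝ (Fin 2))) := by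
  obtain ⟨hv₁0, hv₁1⟩ := hv₁
  obtain ⟨hv₂0, hv₂1⟩ := hv₂
  obtain ⟨hp₁0, hp₁1⟩ := hp₁
  obtain ⟨hp₂0, hp₂1⟩ := hp₂
  obtain ⟨hp₃0, hp₃1⟩ := hp₃
  have hbne : b ≠ 0 := ne_of_gt hb
  set S : Set (EuclideanSpace ℝ (Fin 2)) := {p₁, -p₁, p₂, -p₂, p₃, -p₃} with hSdef
  -- coordinates of negatives
  have hn₁0 : (-p₁) 0 = -(1/2) := by show -(p₁ 0) = _; rw [hp₁0]
  have hn₁1 : (-p₁) 1 = -((a^2+b^2-a)/(2*b)) := by show -(p₁ 1) = _; rw [hp₁1]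
  have hn₂0 : (-p₂) 0 = 1/2 := by show -(p₂ 0) = _; rw [hp₂0]; ring
  have hn₂1 : (-p₂) 1 = -((a^2+b^2-a)/(2*b)) := by show -(p₂ 1) = _; rw [hp₂1]
  have hn₃0 : (-p₃) 0 = -((2*a-1)/2) := by show -(p₃ 0) = _; rw [hp₃0]
  have hn₃1 : (-p₃) 1 = -((b^2+a-a^2)/(2*b)) := by show -(p₃ 1) = _; rw [hp₃1]
  -- memberships in S
  have m₁ : p₁ ∈ S := by simp [hSdef]
  have m₂ : -p₁ ∈ S := by simp [hSdef]
  have m₃ : p₂ ∈ S := by simp [hSdef]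
  have m₄ : -p₂ ∈ S := by simp [hSdef]
  have m₅ : p₃ ∈ S := by simp [hSdef]
  have m₆ : -p₃ ∈ S := by simp [hSdef]
  have m₁' : -(-p₁) ∈ S := by rw [neg_neg]; exact m₁
  have m₃' : -(-p₂) ∈ S := by rw [neg_neg]; exact m₃
  have m₅' : -(-p₃) ∈ S := by rw [neg_neg]; exact m₅
  -- membership characterization of the Voronoi cell
  have hmem : ∀ x : EuclideanSpace ℝ (Fin 2),
      (∀ p ∈ Λ, ‖x‖ ≤ ‖x - p‖) ↔
      (∀ m n : ℤ, 2 * (x 0 * ((m:ℝ) + n * a) + x 1 * ((n:ℝ) * b)) ≤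
        ((m:ℝ) + n * a)^2 + ((n:ℝ) * b)^2) := by
    intro x
    have hq0 : ∀ m n : ℤ, (m • v₁ + n • v₂ : EuclideanSpace ℝ (Fin 2)) 0 = (m:ℝ) + n * a := by
      intro m n; simp [PiLp.add_apply, PiLp.smul_apply, hv₁0, hv₂0, zsmul_eq_mul]
    have hq1 : ∀ m n : ℤ, (m • v₁ + n • v₂ : EuclideanSpace ℝ (Fin 2)) 1 = (n:ℝ) * b := by
      intro m n; simp [PiLp.add_apply, PiLp.smul_apply, hv₁1, hv₂1, zsmul_eq_mul]
    constructor
    · intro h m n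
      have hqΛ : (m • v₁ + n • v₂ : EuclideanSpace ℝ (Fin 2)) ∈ Λ := by
        rw [hΛ]; exact ⟨m, n, rfl⟩
      have h2 := (norm_le_iff_coord x _).mp (h _ hqΛ)
      rw [hq0, hq1] at h2
      exact h2
    · intro h p hp
      rw [hΛ] at hp
      obtain ⟨m, n, rfl⟩ := hp
      rw [norm_le_iff_coord, hq0, hq1]
      exact h m n
  apply Set.Subset.antisymm
  · -- Voronoi cell ⊆ convex hull
    intro x hx
    replace hx := (hmem x).mp hx
    have h₁ : 2 * x 0 ≤ 1 := by have h := hx 1 0; push_cast at h; linarith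
    have h₂ : -(2 * x 0) ≤ 1 := by have h := hx (-1) 0; push_cast at h; linarith
    have h₃ : 2 * (a * x 0 + b * x 1) ≤ a^2 + b^2 := by
      have h := hx 0 1; push_cast at h; nlinarith [h]
    have h₄ : -(2 * (a * x 0 + b * x 1)) ≤ a^2 + b^2 := by
      have h := hx 0 (-1); push_cast at h; nlinarith [h]
    have h₅ : 2 * ((a - 1) * x 0 + b * x 1) ≤ a^2 + b^2 + 1 - 2*a := by
      have h := hx (-1) 1; push_cast at h; nlinarith [h]
    have h₆ : 2 * ((1 - a) * x 0 - b * x 1) ≤ a^2 + b^2 + 1 - 2*a := by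
      have h := hx 1 (-1); push_cast at h; nlinarith [h]
    have hk1 : (0:ℝ) < 1/2 := by norm_num
    have hks : (0:ℝ) < (a^2+b^2)/2 := by nlinarith
    have hkw : (0:ℝ) < (a^2+b^2+1-2*a)/2 := by nlinarith
    have hc : (0:ℝ) < (a^2+b^2-a)/(2*b) := by
      apply div_pos (by nlinarith) (by linarith)
    rcases eq_or_lt_of_le ha0 with haz | hap
    · -- a = 0 : rectangle case, sectors over p₁, p₂, -p₁, -p₂
      subst haz
      rcases le_total 0 (p₁ 0 * x 1 - p₁ 1 * x 0) with d₁ | d₁ <;>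
        rcases le_total 0 (p₂ 0 * x 1 - p₂ 1 * x 0) with d₂ | d₂
      · -- d₁ ≥ 0, d₂ ≥ 0 : sector (p₂, -p₁)
        refine sector_case m₃ m₄ m₂ ?_ d₂ (by rw [hn₁0, hn₁1]; rw [hp₁0, hp₁1] at d₁; linarith)
          hk1 (w0 := -1) (w1 := 0) ?_ ?_ (by linarith)
        · rw [hp₂0, hp₂1, hn₁0, hn₁1]; nlinarith [hc]
        · rw [hp₂0, hp₂1]; ring
        · rw [hn₁0, hn₁1]; ring
      · -- d₁ ≥ 0, d₂ ≤ 0 : sector (p₁, p₂)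
        refine sector_case m₁ m₂ m₃ ?_ d₁ d₂ hks (w0 := 0) (w1 := b) ?_ ?_ (by linarith)
        · rw [hp₁0, hp₁1, hp₂0, hp₂1]; nlinarith [hc]
        · rw [hp₁0, hp₁1]; field_simp; try ring
        · rw [hp₂0, hp₂1]; field_simp; try ring
      · -- d₁ ≤ 0, d₂ ≥ 0 : sector (-p₁, -p₂)
        refine sector_case m₂ m₁' m₄ ?_ (by rw [hn₁0, hn₁1]; rw [hp₁0, hp₁1] at d₁; linarith)
          (by rw [hn₂0, hn₂1]; rw [hp₂0, hp₂1] at d₂; linarith) hks (w0 := 0) (w1 := -b) ?_ ?_ (by linarith)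
        · rw [hn₁0, hn₁1, hn₂0, hn₂1]; nlinarith [hc]
        · rw [hn₁0, hn₁1]; field_simp; try ring
        · rw [hn₂0, hn₂1]; field_simp; try ring
      · -- d₁ ≤ 0, d₂ ≤ 0 : sector (-p₂, p₁)
        refine sector_case m₄ m₃' m₁ ?_ (by rw [hn₂0, hn₂1]; rw [hp₂0, hp₂1] at d₂; linarith) d₁
          hk1 (w0 := 1) (w1 := 0) ?_ ?_ (by linarith)
        · rw [hn₂0, hn₂1, hp₁0, hp₁1]; nlinarith [hc]
        · rw [hn₂0, hn₂1]; ring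
        · rw [hp₁0, hp₁1]; ring
    · -- a > 0 : hexagon case
      have hD1 : 0 < p₁ 0 * p₃ 1 - p₁ 1 * p₃ 0 := by
        rw [hp₁0, hp₁1, hp₃0, hp₃1]
        rw [show (1:ℝ)/2 * ((b^2+a-a^2)/(2*b)) - (a^2+b^2-a)/(2*b) * ((2*a-1)/2)
            = (a^2+b^2)*(1-a)/(2*b) by field_simp; ring]
        apply div_pos (by nlinarith) (by linarith)
      have hD2 : 0 < p₃ 0 * p₂ 1 - p₃ 1 * p₂ 0 := by
        rw [hp₂0, hp₂1, hp₃0, hp₃1]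
        rw [show (2*a-1)/2 * ((a^2+b^2-a)/(2*b)) - (b^2+a-a^2)/(2*b) * (-(1/2))
            = a*(a^2+b^2+1-2*a)/(2*b) by field_simp; ring]
        apply div_pos (by nlinarith) (by linarith)
      have hD3 : 0 < p₂ 0 * (-p₁) 1 - p₂ 1 * (-p₁) 0 := by
        rw [hp₂0, hp₂1, hn₁0, hn₁1]; nlinarith [hc]
      have hD4 : 0 < (-p₁) 0 * (-p₃) 1 - (-p₁) 1 * (-p₃) 0 := by
        rw [hn₁0, hn₁1, hn₃0, hn₃1]
        rw [show -(1/2) * -((b^2+a-a^2)/(2*b)) - -((a^2+b^2-a)/(2*b)) * -((2*a-1)/2)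
            = (a^2+b^2)*(1-a)/(2*b) by field_simp; ring]
        apply div_pos (by nlinarith) (by linarith)
      have hD5 : 0 < (-p₃) 0 * (-p₂) 1 - (-p₃) 1 * (-p₂) 0 := by
        rw [hn₂0, hn₂1, hn₃0, hn₃1]
        rw [show -((2*a-1)/2) * -((a^2+b^2-a)/(2*b)) - -((b^2+a-a^2)/(2*b)) * (1/2)
            = a*(a^2+b^2+1-2*a)/(2*b) by field_simp; ring]
        apply div_pos (by nlinarith) (by linarith)
      have hD6 : 0 < (-p₂) 0 * p₁ 1 - (-p₂) 1 * p₁ 0 := by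
        rw [hn₂0, hn₂1, hp₁0, hp₁1]; nlinarith [hc]
      -- edge data
      have e₁u : a * p₁ 0 + b * p₁ 1 = (a^2+b^2)/2 := by
        rw [hp₁0, hp₁1]; field_simp; ring
      have e₁v : a * p₃ 0 + b * p₃ 1 = (a^2+b^2)/2 := by
        rw [hp₃0, hp₃1]; field_simp; ring
      have e₂u : (a-1) * p₃ 0 + b * p₃ 1 = (a^2+b^2+1-2*a)/2 := by
        rw [hp₃0, hp₃1]; field_simp; ring
      have e₂v : (a-1) * p₂ 0 + b * p₂ 1 = (a^2+b^2+1-2*a)/2 := by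
        rw [hp₂0, hp₂1]; field_simp; ring
      rcases le_total 0 (p₁ 0 * x 1 - p₁ 1 * x 0) with c₁ | c₁ <;>
        rcases le_total 0 (p₃ 0 * x 1 - p₃ 1 * x 0) with c₂ | c₂ <;>
        rcases le_total 0 (p₂ 0 * x 1 - p₂ 1 * x 0) with c₃ | c₃
      · -- (+,+,+) sector (p₂, -p₁)
        refine sector_case m₃ m₄ m₂ hD3 c₃ (by rw [hn₁0, hn₁1]; rw [hp₁0, hp₁1] at c₁; linarith)
          hk1 (w0 := -1) (w1 := 0) ?_ ?_ (by linarith)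
        · rw [hp₂0, hp₂1]; ring
        · rw [hn₁0, hn₁1]; ring
      · -- (+,+,-) sector (p₃, p₂)
        refine sector_case m₅ m₆ m₃ hD2 c₂ c₃ hkw (w0 := a - 1) (w1 := b)
          (by linarith [e₂u]) (by linarith [e₂v]) (by linarith)
      · -- (+,-,+) sector (p₁, p₃)
        refine sector_case m₁ m₂ m₅ hD1 c₁ c₂ hks (w0 := a) (w1 := b)
          (by linarith [e₁u]) (by linarith [e₁v]) (by linarith)
      · -- (+,-,-) sector (p₁, p₃)
        refine sector_case m₁ m₂ m₅ hD1 c₁ c₂ hks (w0 := a) (w1 := b)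
          (by linarith [e₁u]) (by linarith [e₁v]) (by linarith)
      · -- (-,+,+) sector (-p₁, -p₃)
        refine sector_case m₂ m₁' m₆ hD4 (by rw [hn₁0, hn₁1]; rw [hp₁0, hp₁1] at c₁; linarith)
          (by rw [hn₃0, hn₃1]; rw [hp₃0, hp₃1] at c₂; linarith) hks (w0 := -a) (w1 := -b) ?_ ?_ (by linarith)
        · rw [hn₁0, hn₁1]; rw [hp₁0, hp₁1] at e₁u; linarith [e₁u]
        · rw [hn₃0, hn₃1]; rw [hp₃0, hp₃1] at e₁v; linarith [e₁v]
      · -- (-,+,-) sector (p₃, p₂)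
        refine sector_case m₅ m₆ m₃ hD2 c₂ c₃ hkw (w0 := a - 1) (w1 := b)
          (by linarith [e₂u]) (by linarith [e₂v]) (by linarith)
      · -- (-,-,+) sector (-p₃, -p₂)
        refine sector_case m₆ m₅' m₄ hD5 (by rw [hn₃0, hn₃1]; rw [hp₃0, hp₃1] at c₂; linarith)
          (by rw [hn₂0, hn₂1]; rw [hp₂0, hp₂1] at c₃; linarith) hkw (w0 := 1 - a) (w1 := -b) ?_ ?_ (by linarith)
        · rw [hn₃0, hn₃1]; rw [hp₃0, hp₃1] at e₂u; linarith [e₂u]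
        · rw [hn₂0, hn₂1]; rw [hp₂0, hp₂1] at e₂v; linarith [e₂v]
      · -- (-,-,-) sector (-p₂, p₁)
        refine sector_case m₄ m₃' m₁ hD6 (by rw [hn₂0, hn₂1]; rw [hp₂0, hp₂1] at c₃; linarith) c₁
          hk1 (w0 := 1) (w1 := 0) ?_ ?_ (by linarith)
        · rw [hn₂0, hn₂1]; ring
        · rw [hp₁0, hp₁1]; ring
  · -- convex hull ⊆ Voronoi cell
    have hconv : Convex ℝ {x : EuclideanSpace ℝ (Fin 2) | ∀ p ∈ Λ, ‖x‖ ≤ ‖x - p‖} := by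
      intro x hx y hy α β hα hβ hαβ
      rw [Set.mem_setOf_eq, hmem] at hx hy ⊢
      intro m n
      have hx' := hx m n
      have hy' := hy m n
      have hz0 : (α • x + β • y : EuclideanSpace ℝ (Fin 2)) 0 = α * x 0 + β * y 0 := rfl
      have hz1 : (α • x + β • y : EuclideanSpace ℝ (Fin 2)) 1 = α * x 1 + β * y 1 := rfl
      rw [hz0, hz1]
      nlinarith [mul_le_mul_of_nonneg_left hx' hα, mul_le_mul_of_nonneg_left hy' hβ]
    apply convexHull_min _ hconv
    intro q hq
    rw [Set.mem_setOf_eq, hmem]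
    have key : ∀ (M N : ℤ), (0:ℝ) ≤ (M:ℝ) * (M - 1) + (a^2+b^2) * ((N:ℝ) * (N - 1))
        + 2 * a * M * N := fun M N => keyQ a (a^2+b^2) ha0 ha hab M N
    rcases hq with rfl | rfl | rfl | rfl | rfl | rfl
    · intro m n
      rw [hp₁0, hp₁1,
        show (a^2+b^2-a)/(2*b) * ((n:ℝ)*b) = (n:ℝ)*(a^2+b^2-a)/2 by field_simp]
      nlinarith [key m n]
    · intro m n
      rw [hn₁0, hn₁1,
        show -((a^2+b^2-a)/(2*b)) * ((n:ℝ)*b) = -((n:ℝ)*(a^2+b^2-a)/2) by field_simp]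
      have := key (-m) (-n); push_cast at this; nlinarith [this]
    · intro m n
      rw [hp₂0, hp₂1,
        show (a^2+b^2-a)/(2*b) * ((n:ℝ)*b) = (n:ℝ)*(a^2+b^2-a)/2 by field_simp]
      have := key (m+1) n; push_cast at this; nlinarith [this]
    · intro m n
      rw [hn₂0, hn₂1,
        show -((a^2+b^2-a)/(2*b)) * ((n:ℝ)*b) = -((n:ℝ)*(a^2+b^2-a)/2) by field_simp]
      have := key (-m+1) (-n); push_cast at this; nlinarith [this]
    · intro m n
      rw [hp₃0, hp₃1,
        show (b^2+a-a^2)/(2*b) * ((n:ℝ)*b) = (n:ℝ)*(b^2+a-a^2)/2 by field_simp]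
      have := key (-m) (1-n); push_cast at this; nlinarith [this]
    · intro m n
      rw [hn₃0, hn₃1,
        show -((b^2+a-a^2)/(2*b)) * ((n:ℝ)*b) = -((n:ℝ)*(b^2+a-a^2)/2) by field_simp]
      have := key m (1+n); push_cast at this; nlinarith [this]
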